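/- For natural numbers n, m and indices 0 ≤ k ≤ n, 0 ≤ r ≤ m, define the operator C^{n,m}_{k,r} = Σ_{j=0}^{min(k, m−r)} ((−1)^k/(n−k)!)((−1)^{r+j}/(m−r−j)!) C(k, j) ∂_E^{n−k} ∘ M_{E^{−k}} ∘ ∂_E^{m−r−j} ∘ M_{E^{−r−j}} acting on Laurent monomials in E. Then C^{n,m}_{k,r} = ((−1)^{k+r}/((n−k)!(m−r)!)) ∂_E^{n+m−k−r} ∘ M_{E^{−k−r}}, and consequently C^{n,m}_{k,r} = C^{m,n}_{r,k} as operators on Laurent polynomials in E. -/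

import Mathlib

/-- Laurent polynomials in `E`, encoded by coefficient functions `a ↦` coefficient
of `E^a`. -/
abbrev ESpace : Type := ℤ → ℚ

/-- `∂_E`: on monomials, `∂_E E^a = a E^{a−1}`. -/
def dE (f : ESpace) : ESpace := fun a => ((a : ℚ) + 1) * f (a + 1)

/-- Multiplication by `E^p` (`p ∈ ℤ`). -/
def mE (p : ℤ) (f : ESpace) : ESpace := fun a => f (a - p)

/-- The operator `C^{n,m}_{k,r}` from the abelian commutator computation. -/
noncomputable def Cop (n m k r : ℕ) (f : ESpace) : ESpace :=
  ∑ j ∈ Finset.range (min k (m - r) + 1),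
    (((-1 : ℚ) ^ k / (Nat.factorial (n - k))) *
        ((-1 : ℚ) ^ (r + j) / (Nat.factorial (m - r - j))) * (Nat.choose k j)) •
      dE^[n - k] (mE (-(k : ℤ)) (dE^[m - r - j] (mE (-((r : ℤ) + j)) f)))

lemma dE_iter (q : ℕ) (f : ESpace) (a : ℤ) :
    dE^[q] f a = (∏ i ∈ Finset.range q, ((a : ℚ) + i + 1)) * f (a + q) := by
  induction q generalizing a with
  | zero => simp
  | succ q ih =>
    rw [Function.iterate_succ_apply']
    show ((a:ℚ) + 1) * dE^[q] f (a+1) = _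
    rw [ih, Finset.prod_range_succ']
    have h1 : a + 1 + (q : ℤ) = a + ((q : ℕ) + 1 : ℕ) := by push_cast; ring
    rw [h1]
    have h2 : (∏ i ∈ Finset.range q, (((a+1:ℤ):ℚ) + i + 1))
        = ∏ i ∈ Finset.range q, ((a:ℚ) + ((i+1 : ℕ):ℚ) + 1) :=
      Finset.prod_congr rfl (fun i _ => by push_cast; ring)
    rw [h2]
    push_cast
    ring

lemma Tdiff (B j : ℕ) (x : ℚ) :
    (B.descFactorial j : ℚ) * ∏ i ∈ Finset.range (B - j), (x + i + 1)
      - (B.descFactorial (j+1) : ℚ) * ∏ i ∈ Finset.range (B - (j+1)), (x + i + 1)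
    = (B.descFactorial j : ℚ) * ∏ i ∈ Finset.range (B - j), (x + i) := by
  rcases le_or_gt B j with h | h
  · have h0 : B - j = 0 := by omega
    have h1 : B - (j+1) = 0 := by omega
    have h2 : B.descFactorial (j+1) = 0 := Nat.descFactorial_eq_zero_iff_lt.2 (by omega)
    simp [h0, h1, h2]
  · obtain ⟨s, hs⟩ : ∃ s, B - j = s + 1 := ⟨B - j - 1, by omega⟩
    have hs' : B - (j+1) = s := by omega
    have hd : (B.descFactorial (j+1) : ℚ) = ((s:ℚ)+1) * B.descFactorial j := by
      rw [Nat.descFactorial_succ]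
      have : B - j = s + 1 := hs
      push_cast [this]
      ring
    rw [hs, hs', hd, Finset.prod_range_succ, Finset.prod_range_succ']
    have h2 : ∀ i ∈ Finset.range s, x + ((i+1 : ℕ):ℚ) = x + i + 1 := by
      intro i _; push_cast; ring
    rw [Finset.prod_congr rfl h2]
    push_cast
    ring

lemma key (B k : ℕ) (x : ℚ) :
    ∑ j ∈ Finset.range (k+1), ((-1:ℚ)^j * (k.choose j) * (B.descFactorial j) *
      ∏ i ∈ Finset.range (B - j), (x + i + 1))
    = ∏ i ∈ Finset.range B, (x - k + i + 1) := by
  induction k generalizing x with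
  | zero => simp
  | succ k ih =>
    set g : ℕ → ℚ := fun j => (-1:ℚ)^j * (k.choose j) * (B.descFactorial j) *
      ∏ i ∈ Finset.range (B - j), (x + i + 1) with hgdef
    set h : ℕ → ℚ := fun j => (-1:ℚ)^j * (k.choose j) * (B.descFactorial j) *
      ∏ i ∈ Finset.range (B - j), (x - 1 + i + 1) with hhdef
    have hstep : ∑ j ∈ Finset.range (k+1+1), ((-1:ℚ)^j * ((k+1).choose j) * (B.descFactorial j) *
        ∏ i ∈ Finset.range (B - j), (x + i + 1)) = ∑ j ∈ Finset.range (k+1), h j := by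
      rw [Finset.sum_range_succ']
      have hF : ∀ j ∈ Finset.range (k+1),
          ((-1:ℚ)^(j+1) * ((k+1).choose (j+1)) * (B.descFactorial (j+1)) *
            ∏ i ∈ Finset.range (B - (j+1)), (x + i + 1))
          = (h j - g j) + g (j+1) := by
        intro j _
        have hT := Tdiff B j x
        have hprod : ∀ i ∈ Finset.range (B - j), x + (i:ℚ) = x - 1 + i + 1 := by
          intro i _; ring
        rw [Finset.prod_congr rfl hprod] at hT
        have hc : (((k+1).choose (j+1)) : ℚ) = (k.choose j : ℚ) + (k.choose (j+1) : ℚ) := by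
          rw [Nat.choose_succ_succ]; push_cast; ring
        rw [hc]
        simp only [hgdef, hhdef]
        linear_combination ((-1:ℚ)^j * (k.choose j)) * hT
      rw [Finset.sum_congr rfl hF]
      rw [Finset.sum_add_distrib, Finset.sum_sub_distrib]
      have hgs : ∑ j ∈ Finset.range (k+1), g (j+1) = ∑ j ∈ Finset.range (k+1), g j - g 0 := by
        have := Finset.sum_range_succ' g (k+1)
        have htop : g (k+1) = 0 := by
          simp [hgdef, Nat.choose_succ_self]
        rw [Finset.sum_range_succ, htop, add_zero] at this
        linarith [this]
      rw [hgs]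
      have hg0 : ((-1:ℚ)^(0:ℕ) * ((k+1).choose 0) * (B.descFactorial 0) *
          ∏ i ∈ Finset.range (B - 0), (x + i + 1)) = g 0 := by
        simp [hgdef]
      rw [hg0]
      ring
    rw [hstep]
    have := ih (x - 1)
    simp only [hhdef]
    rw [this]
    apply Finset.prod_congr rfl
    intro i _
    push_cast
    ring


lemma DM (q : ℕ) (p : ℤ) (g : ESpace) (a : ℤ) :
    dE^[q] (mE p g) a = (∏ i ∈ Finset.range q, ((a : ℚ) + i + 1)) * g (a + q - p) := by
  rw [dE_iter]; rfl

lemma Cop_closed (n m k r : ℕ) (hk : k ≤ n) (hr : r ≤ m) (f : ESpace) :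
    Cop n m k r f =
      ((-1 : ℚ) ^ (k + r) / ((Nat.factorial (n - k)) * (Nat.factorial (m - r)))) •
        dE^[n + m - k - r] (mE (-(k : ℤ) - r) f) := by
  obtain ⟨A, rfl⟩ : ∃ A, n = A + k := ⟨n - k, by omega⟩
  obtain ⟨B, rfl⟩ : ∃ B, m = B + r := ⟨m - r, by omega⟩
  have hAB : A + k + (B + r) - k - r = A + B := by omega
  funext a
  simp only [Cop, Nat.add_sub_cancel, hAB, Finset.sum_apply, Pi.smul_apply, smul_eq_mul]
  set x : ℚ := (a : ℚ) + A + k with hx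
  set y : ℚ := f (a + (A + B : ℕ) + ((k : ℤ) + r)) with hy
  have hterm : ∀ j ∈ Finset.range (min k B + 1),
      ((-1 : ℚ) ^ k / (Nat.factorial A)) * ((-1 : ℚ) ^ (r + j) / (Nat.factorial (B - j))) *
          (Nat.choose k j) *
        dE^[A] (mE (-(k:ℤ)) (dE^[B - j] (mE (-((r:ℤ) + j)) f))) a
      = (((-1 : ℚ) ^ (k + r) / ((Nat.factorial A) * (Nat.factorial B))) *
            (∏ i ∈ Finset.range A, ((a : ℚ) + i + 1)) * y) *
          ((-1:ℚ)^j * (Nat.choose k j) * (B.descFactorial j) *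
            ∏ i ∈ Finset.range (B - j), (x + i + 1)) := by
    intro j hj
    have hjB : j ≤ B := by
      have := Finset.mem_range.mp hj; omega
    rw [DM, DM]
    have harg : a + (A:ℤ) - -(k:ℤ) + ((B - j : ℕ):ℤ) - -((r:ℤ) + j) = a + ((A + B : ℕ):ℤ) + ((k:ℤ) + r) := by
      omega
    rw [harg]
    have hprod : (∏ i ∈ Finset.range (B - j), ((((a + (A:ℤ) - -(k:ℤ)):ℤ):ℚ) + i + 1))
        = ∏ i ∈ Finset.range (B - j), (x + i + 1) :=
      Finset.prod_congr rfl (fun i _ => by rw [hx]; push_cast; ring)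
    rw [hprod]
    have hfac : ((Nat.factorial (B - j) : ℚ)) * (B.descFactorial j) = (Nat.factorial B : ℚ) := by
      exact_mod_cast congrArg (Nat.cast (R := ℚ)) (Nat.factorial_mul_descFactorial hjB)
    have hBj : (Nat.factorial (B - j) : ℚ) ≠ 0 := Nat.cast_ne_zero.mpr (Nat.factorial_ne_zero _)
    have hB : (Nat.factorial B : ℚ) ≠ 0 := Nat.cast_ne_zero.mpr (Nat.factorial_ne_zero _)
    have hA : (Nat.factorial A : ℚ) ≠ 0 := Nat.cast_ne_zero.mpr (Nat.factorial_ne_zero _)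
    rw [← hy]
    have hco : ((-1:ℚ)^k / (Nat.factorial A)) * ((-1:ℚ)^(r+j) / (Nat.factorial (B-j))) * ((Nat.choose k j : ℚ))
        = ((-1:ℚ)^(k+r) / ((Nat.factorial A) * (Nat.factorial B))) * ((-1:ℚ)^j * (Nat.choose k j) * (B.descFactorial j)) := by
      rw [pow_add, pow_add]
      field_simp
      linear_combination (-(Nat.choose k j : ℚ)) * hfac
    linear_combination ((∏ i ∈ Finset.range A, ((a:ℚ) + i + 1)) * (∏ i ∈ Finset.range (B - j), (x + i + 1)) * y) * hco
  rw [Finset.sum_congr rfl hterm, ← Finset.mul_sum]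
  have hsub : ∑ j ∈ Finset.range (min k B + 1),
        ((-1:ℚ)^j * (Nat.choose k j) * (B.descFactorial j) *
          ∏ i ∈ Finset.range (B - j), (x + i + 1))
      = ∑ j ∈ Finset.range (k + 1),
        ((-1:ℚ)^j * (Nat.choose k j) * (B.descFactorial j) *
          ∏ i ∈ Finset.range (B - j), (x + i + 1)) := by
    apply Finset.sum_subset
    · exact Finset.range_subset_range.mpr (by omega)
    · intro j hj hj'
      have h1 : min k B < j := by
        have := Finset.mem_range.mp hj
        simp only [Finset.mem_range, not_lt] at hj'
        omega
      have h2 : j ≤ k := by have := Finset.mem_range.mp hj; omega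
      have hBj : B < j := by omega
      rw [Nat.descFactorial_eq_zero_iff_lt.mpr hBj]
      simp
  rw [hsub, key B k x]
  rw [DM]
  have harg2 : a + ((A + B : ℕ):ℤ) - (-(k:ℤ) - r) = a + ((A + B : ℕ):ℤ) + ((k:ℤ) + r) := by omega
  rw [harg2, ← hy]
  have hPAB : (∏ i ∈ Finset.range (A + B), (((a:ℤ):ℚ) + i + 1))
      = (∏ i ∈ Finset.range A, ((a:ℚ) + i + 1)) * ∏ i ∈ Finset.range B, (x - k + i + 1) := by
    rw [Finset.prod_range_add]
    congr 1
    exact Finset.prod_congr rfl (fun i _ => by rw [hx]; push_cast; ring)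
  rw [hPAB]
  ring

/-- `C^{n,m}_{k,r} = ((−1)^{k+r}/((n−k)!(m−r)!)) ∂_E^{n+m−k−r} ∘ M_{E^{−k−r}}`,
and consequently `C^{n,m}_{k,r} = C^{m,n}_{r,k}` as operators on Laurent
polynomials in `E`. -/
theorem Cop_closed_form_and_symm (n m k r : ℕ) (hk : k ≤ n) (hr : r ≤ m) :
    (∀ f : ESpace, Cop n m k r f =
      ((-1 : ℚ) ^ (k + r) / ((Nat.factorial (n - k)) * (Nat.factorial (m - r)))) •
        dE^[n + m - k - r] (mE (-(k : ℤ) - r) f)) ∧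
    (∀ f : ESpace, Cop n m k r f = Cop m n r k f) := by
  constructor
  · intro f; exact Cop_closed n m k r hk hr f
  · intro f
    rw [Cop_closed n m k r hk hr f, Cop_closed m n r k hr hk f]
    have h1 : m + n - r - k = n + m - k - r := by omega
    have h2 : (-(r:ℤ) - k) = (-(k:ℤ) - r) := by ring
    rw [h1, h2]
    congr 1
    rw [add_comm r k, mul_comm]
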